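/- Let A ∈ ℂ^{m×m} and D ∈ ℂ^{n×n}. The equation A X − conj(X) D = E has a unique solution X ∈ ℂ^{m×n} for every right-hand side E ∈ ℂ^{m×n} if and only if the matrices conj(A)·A ∈ ℂ^{m×m} and conj(D)·D ∈ ℂ^{n×n} have no common eigenvalue. -/

import Mathlib

open Matrix

namespace ConjSylvAux

open Polynomial

variable {m n : ℕ}

local notation "c" => starRingEnd ℂ

lemma my_aeval_intertwine {m n : ℕ} (B : Matrix (Fin m) (Fin m) ℂ) (C : Matrix (Fin n) (Fin n) ℂ)
    (X : Matrix (Fin m) (Fin n) ℂ) (h : B * X = X * C) (p : Polynomial ℂ) :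
    (aeval B p) * X = X * (aeval C p) := by
  induction p using Polynomial.induction_on' with
  | add p q hp hq => rw [map_add, map_add, Matrix.add_mul, Matrix.mul_add, hp, hq]
  | monomial k r =>
    have hpow : ∀ k : ℕ, B ^ k * X = X * C ^ k := by
      intro k
      induction k with
      | zero => simp
      | succ k ih => rw [pow_succ', pow_succ', Matrix.mul_assoc, ih, ← Matrix.mul_assoc, h,
          Matrix.mul_assoc]
    simp only [Polynomial.aeval_monomial, Algebra.algebraMap_eq_smul_one,
      Matrix.smul_mul, one_mul, Matrix.mul_smul, hpow k]

lemma my_eval_charpoly {n : ℕ} (M : Matrix (Fin n) (Fin n) ℂ) (r : ℂ) :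
    M.charpoly.eval r = (r • (1 : Matrix (Fin n) (Fin n) ℂ) - M).det := by
  rw [Matrix.charpoly, ← Polynomial.coe_evalRingHom, RingHom.map_det]
  congr 1
  ext i j
  by_cases hij : i = j
  · subst hij
    simp [charmatrix_apply_eq, Matrix.smul_apply, Matrix.one_apply]
  · simp [charmatrix_apply_ne _ _ _ hij, Matrix.smul_apply, Matrix.one_apply, hij]

lemma my_det_aeval_prod_ne_zero {m : ℕ} (B : Matrix (Fin m) (Fin m) ℂ) (s : Multiset ℂ)
    (hs : ∀ r ∈ s, (B - r • 1).det ≠ 0) :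
    ((aeval B) (s.map (fun r => X - Polynomial.C r)).prod).det ≠ 0 := by
  induction s using Multiset.induction_on with
  | empty => simp
  | cons r s ih =>
    rw [Multiset.map_cons, Multiset.prod_cons, _root_.map_mul, Matrix.det_mul]
    have h1 : (aeval B) (X - Polynomial.C r) = B - r • 1 := by
      simp [Algebra.algebraMap_eq_smul_one]
    rw [h1]
    exact mul_ne_zero (hs r (Multiset.mem_cons_self r s))
      (ih (fun r' hr' => hs r' (Multiset.mem_cons_of_mem hr')))

lemma my_sylvester_eq_zero {m n : ℕ} (B : Matrix (Fin m) (Fin m) ℂ) (C : Matrix (Fin n) (Fin n) ℂ)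
    (X : Matrix (Fin m) (Fin n) ℂ)
    (h : ∀ μ : ℂ, ¬((B - μ • 1).det = 0 ∧ (C - μ • 1).det = 0))
    (hX : B * X = X * C) : X = 0 := by
  set p := C.charpoly with hp
  have h0 : (aeval B p) * X = 0 := by
    rw [my_aeval_intertwine B C X hX p, Matrix.aeval_self_charpoly, Matrix.mul_zero]
  have hsplit : p = (p.roots.map (fun a => Polynomial.X - Polynomial.C a)).prod :=
    (IsAlgClosed.splits p).eq_prod_roots_of_monic (Matrix.charpoly_monic C)
  have hdet : (aeval B p).det ≠ 0 := by
    conv_lhs => rw [hsplit]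
    apply my_det_aeval_prod_ne_zero
    intro r hr
    have hroot : p.eval r = 0 := (Polynomial.isRoot_of_mem_roots hr)
    have hC : (C - r • 1).det = 0 := by
      have := my_eval_charpoly C r
      rw [hroot] at this
      have h2 : (C - r • (1 : Matrix (Fin n) (Fin n) ℂ)) = -(r • 1 - C) := by rw [neg_sub]
      rw [h2, Matrix.det_neg, ← this]
      simp
    intro hB
    exact h r ⟨hB, hC⟩
  have hinv := Matrix.nonsing_inv_mul (aeval B p) (Ne.isUnit hdet)
  calc X = 1 * X := (Matrix.one_mul X).symm
    _ = ((aeval B p)⁻¹ * (aeval B p)) * X := by rw [hinv]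
    _ = (aeval B p)⁻¹ * ((aeval B p) * X) := Matrix.mul_assoc _ _ _
    _ = 0 := by rw [h0, Matrix.mul_zero]

lemma mul_vecMulVec (A : Matrix (Fin m) (Fin m) ℂ) (u : Fin m → ℂ) (a : Fin n → ℂ) :
    A * vecMulVec u a = vecMulVec (A *ᵥ u) a := by
  ext i j
  simp only [Matrix.mul_apply, vecMulVec_apply, Matrix.mulVec, dotProduct,
    Finset.sum_mul, mul_assoc]

lemma vecMulVec_mul (u : Fin m → ℂ) (a : Fin n → ℂ) (D : Matrix (Fin n) (Fin n) ℂ) :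
    vecMulVec u a * D = vecMulVec u (a ᵥ* D) := by
  ext i j
  simp only [Matrix.mul_apply, vecMulVec_apply, Matrix.vecMul, dotProduct,
    Finset.mul_sum, mul_assoc]

lemma vecMulVec_map (u : Fin m → ℂ) (a : Fin n → ℂ) :
    (vecMulVec u a).map c = vecMulVec (fun i => c (u i)) (fun j => c (a j)) := by
  ext i j
  simp [vecMulVec_apply]

lemma smul_vecMulVec (s : ℂ) (u : Fin m → ℂ) (a : Fin n → ℂ) :
    vecMulVec (s • u) a = s • vecMulVec u a := by
  ext i j
  simp [vecMulVec_apply, mul_assoc]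

lemma vecMulVec_smul (s : ℂ) (u : Fin m → ℂ) (a : Fin n → ℂ) :
    vecMulVec u (s • a) = s • vecMulVec u a := by
  ext i j
  simp [vecMulVec_apply]
  ring

lemma exists_eigenvec {k : ℕ} (M : Matrix (Fin k) (Fin k) ℂ) (μ : ℂ)
    (h : (M - μ • 1).det = 0) : ∃ v : Fin k → ℂ, v ≠ 0 ∧ M *ᵥ v = μ • v := by
  obtain ⟨v, hv, hv0⟩ := (Matrix.exists_mulVec_eq_zero_iff).mpr h
  refine ⟨v, hv, ?_⟩
  rwa [Matrix.sub_mulVec, Matrix.smul_mulVec, Matrix.one_mulVec, sub_eq_zero] at hv0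

lemma conj_mulVec {k l : ℕ} (M : Matrix (Fin k) (Fin l) ℂ) (v : Fin l → ℂ) :
    (fun i => c ((M *ᵥ v) i)) = (M.map c) *ᵥ (fun j => c (v j)) := by
  funext i
  simp [Matrix.mulVec, dotProduct, map_sum, Matrix.map_apply]

lemma map_conj_conj {k l : ℕ} (M : Matrix (Fin k) (Fin l) ℂ) : (M.map c).map c = M := by
  ext i j
  simp [Matrix.map_apply]

lemma det_map_conj {k : ℕ} (M : Matrix (Fin k) (Fin k) ℂ) : (M.map c).det = c M.det := by
  rw [← RingHom.mapMatrix_apply, ← RingHom.map_det]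

lemma exists_nonzero_ker (A : Matrix (Fin m) (Fin m) ℂ) (D : Matrix (Fin n) (Fin n) ℂ) (μ : ℂ)
    (hA : (A.map c * A - μ • 1).det = 0) (hD : (D.map c * D - μ • 1).det = 0) :
    ∃ X : Matrix (Fin m) (Fin n) ℂ, X ≠ 0 ∧ A * X = X.map c * D := by
  by_cases hμ : μ = 0
  · -- degenerate case : det A = 0 and det D = 0
    subst hμ
    rw [zero_smul, sub_zero, Matrix.det_mul, det_map_conj] at hA hD
    have hdetA : A.det = 0 := by
      rcases mul_eq_zero.mp hA with h | h
      · rwa [_root_.map_eq_zero] at h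
      · exact h
    have hdetD : D.det = 0 := by
      rcases mul_eq_zero.mp hD with h | h
      · rwa [_root_.map_eq_zero] at h
      · exact h
    obtain ⟨u, hu0, hu⟩ : ∃ u : Fin m → ℂ, u ≠ 0 ∧ A *ᵥ u = 0 :=
      Matrix.exists_mulVec_eq_zero_iff.mpr hdetA
    obtain ⟨w, hw0, hw⟩ : ∃ w : Fin n → ℂ, w ≠ 0 ∧ Dᵀ *ᵥ w = 0 :=
      Matrix.exists_mulVec_eq_zero_iff.mpr (by rwa [Matrix.det_transpose])
    refine ⟨vecMulVec u (fun j => c (w j)), ?_, ?_⟩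
    · intro hX
      obtain ⟨i, hi⟩ := Function.ne_iff.mp hu0
      obtain ⟨j, hj⟩ := Function.ne_iff.mp hw0
      have := congrFun (congrFun hX i) j
      rw [vecMulVec_apply, Matrix.zero_apply, mul_eq_zero] at this
      rcases this with h | h
      · exact hi h
      · exact hj (by simpa using h)
    · rw [mul_vecMulVec, hu, vecMulVec_map, vecMulVec_mul]
      have h1 : vecMulVec (0 : Fin m → ℂ) (fun j => c (w j)) = 0 := by
        ext i j; simp [vecMulVec_apply]
      have h2 : (fun j => c (c (w j))) ᵥ* D = 0 := by
        rw [show (fun j => c (c (w j))) = w by funext j; simp, ← Matrix.mulVec_transpose, hw]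
      rw [h1, h2]
      ext i j
      simp [vecMulVec_apply]
  · -- main case
    obtain ⟨u, hu0, hu⟩ := exists_eigenvec (A.map c * A) μ hA
    obtain ⟨a, ha0, ha⟩ := exists_eigenvec ((D.map c * D)ᵀ) μ (by
      rw [show (D.map c * D)ᵀ - μ • 1 = (D.map c * D - μ • 1)ᵀ by
        rw [Matrix.transpose_sub, Matrix.transpose_smul, Matrix.transpose_one],
        Matrix.det_transpose]
      exact hD)
    have hcμ : c μ ≠ 0 := by simpa using hμ
    set q : Fin m → ℂ := fun i => c ((A *ᵥ u) i) with hq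
    set b : Fin n → ℂ := (c μ)⁻¹ • (Dᵀ *ᵥ fun k => c (a k)) with hb
    -- F2 : Dᵀ *ᵥ (c ∘ a) = c μ • b
    have hF2 : (Dᵀ *ᵥ fun k => c (a k)) = c μ • b := by
      rw [hb, smul_smul, mul_inv_cancel₀ hcμ, one_smul]
    -- F1 : Dᵀ *ᵥ (c ∘ b) = a
    have hF1 : (Dᵀ *ᵥ fun k => c (b k)) = a := by
      have hcb : (fun k => c (b k)) = μ⁻¹ • ((D.map c)ᵀ *ᵥ a) := by
        funext k
        rw [hb]
        simp only [Pi.smul_apply, smul_eq_mul, _root_.map_mul, map_inv₀, Complex.conj_conj]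
        congr 1
        rw [congrFun (conj_mulVec Dᵀ _) k, Matrix.transpose_map]
        congr 1
        funext j
        simp
      rw [hcb, Matrix.mulVec_smul, Matrix.mulVec_mulVec, ← Matrix.transpose_mul, ha,
        smul_smul, inv_mul_cancel₀ hμ, one_smul]
    -- F3 : A *ᵥ q = c μ • (c ∘ u)
    have hF3 : A *ᵥ q = c μ • fun i => c (u i) := by
      have e1 : (fun i => c (((A.map c) *ᵥ (A *ᵥ u)) i)) = A *ᵥ q := by
        rw [conj_mulVec, map_conj_conj]
      rw [← e1, Matrix.mulVec_mulVec, hu]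
      funext i
      simp [_root_.map_mul]
    -- the family of kernel elements
    set P : ℂ → Matrix (Fin m) (Fin n) ℂ :=
      fun ω => ω • vecMulVec u a + (c ω) • vecMulVec q b with hP
    have hker : ∀ ω : ℂ, A * P ω = (P ω).map c * D := by
      intro ω
      have lhs : A * P ω
          = ω • vecMulVec (A *ᵥ u) a + (c ω) • ((c μ) • vecMulVec (fun i => c (u i)) b) := by
        rw [hP]
        simp only [Matrix.mul_add, Matrix.mul_smul, mul_vecMulVec, hF3, smul_vecMulVec]
      have rhs : (P ω).map c * D
          = (c ω) • ((c μ) • vecMulVec (fun i => c (u i)) b) + ω • vecMulVec (A *ᵥ u) a := by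
        rw [hP]
        have hmap : (ω • vecMulVec u a + (c ω) • vecMulVec q b).map c
            = (c ω) • vecMulVec (fun i => c (u i)) (fun j => c (a j))
              + ω • vecMulVec (fun i => c (q i)) (fun j => c (b j)) := by
          ext i j
          simp [vecMulVec_apply, Matrix.map_apply, mul_assoc]
        rw [hmap, Matrix.add_mul, Matrix.smul_mul, Matrix.smul_mul, vecMulVec_mul, vecMulVec_mul]
        congr 2
        · rw [← Matrix.mulVec_transpose, hF2, vecMulVec_smul]
        · rw [show (fun i => c (q i)) = A *ᵥ u by funext i; simp [hq]]
          rw [← Matrix.mulVec_transpose, hF1]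
      rw [lhs, rhs, add_comm]
    -- nonvanishing : P 1 and P I cannot both be zero
    have hnz : P 1 ≠ 0 ∨ P Complex.I ≠ 0 := by
      by_contra hcon
      push_neg at hcon
      obtain ⟨h1, hI⟩ := hcon
      have key : ∀ i j, u i * a j = 0 := by
        intro i j
        have e1 : u i * a j + q i * b j = 0 := by
          have := congrFun (congrFun h1 i) j
          simpa [hP, vecMulVec_apply] using this
        have e2 : Complex.I * (u i * a j) + (- Complex.I) * (q i * b j) = 0 := by
          have := congrFun (congrFun hI i) j
          simpa [hP, vecMulVec_apply, Complex.conj_I, mul_assoc] using this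
        have e3 : q i * b j = -(u i * a j) := by linear_combination e1
        rw [e3] at e2
        have : (2 * Complex.I) * (u i * a j) = 0 := by ring_nf; linear_combination e2
        simpa [Complex.I_ne_zero] using this
      obtain ⟨i0, hi0⟩ := Function.ne_iff.mp hu0
      apply ha0
      funext j
      rcases mul_eq_zero.mp (key i0 j) with h | h
      · exact absurd h hi0
      · exact h
    rcases hnz with h | h
    · exact ⟨P 1, h, hker 1⟩
    · exact ⟨P Complex.I, h, hker Complex.I⟩

/-- The conjugate-Sylvester operator as a real-linear map. -/
noncomputable def sylvMap (m n : ℕ) (A : Matrix (Fin m) (Fin m) ℂ)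
    (D : Matrix (Fin n) (Fin n) ℂ) :
    Matrix (Fin m) (Fin n) ℂ →ₗ[ℝ] Matrix (Fin m) (Fin n) ℂ where
  toFun X := A * X - X.map c * D
  map_add' X Y := by
    have hm : (X + Y).map c = X.map c + Y.map c := by
      ext i j; simp [Matrix.map_apply]
    rw [hm, Matrix.mul_add, Matrix.add_mul]
    abel
  map_smul' r X := by
    have hm : (r • X).map c = r • X.map c := by
      ext i j
      simp [Matrix.map_apply, Matrix.smul_apply, Complex.real_smul]
    rw [RingHom.id_apply, hm, Matrix.mul_smul, Matrix.smul_mul, smul_sub]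

end ConjSylvAux

open ConjSylvAux in
/-- The standard conjugate-Sylvester equation `A X - conj(X) D = E` has a unique solution
for every right-hand side `E` iff `conj(A)·A` and `conj(D)·D` have no common eigenvalue. -/
theorem std_conj_sylvester_unique_iff (m n : ℕ)
    (A : Matrix (Fin m) (Fin m) ℂ) (D : Matrix (Fin n) (Fin n) ℂ) :
    (∀ E : Matrix (Fin m) (Fin n) ℂ, ∃! X : Matrix (Fin m) (Fin n) ℂ,
        A * X - (X.map (starRingEnd ℂ)) * D = E)
      ↔
    (∀ μ : ℂ,
        ¬((A.map (starRingEnd ℂ) * A - μ • (1 : Matrix (Fin m) (Fin m) ℂ)).det = 0 ∧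
          (D.map (starRingEnd ℂ) * D - μ • (1 : Matrix (Fin n) (Fin n) ℂ)).det = 0)) := by
  constructor
  · intro h μ hμ
    obtain ⟨hAμ, hDμ⟩ := hμ
    obtain ⟨X, hX0, hXk⟩ := exists_nonzero_ker A D μ hAμ hDμ
    obtain ⟨Y, _, huniq⟩ := h 0
    have h1 := huniq X (show A * X - X.map (starRingEnd ℂ) * D = 0 by rw [hXk, sub_self])
    have h2 := huniq 0 (show A * 0 - (0 : Matrix (Fin m) (Fin n) ℂ).map (starRingEnd ℂ) * D = 0 by simp)
    exact hX0 (h1.trans h2.symm)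
  · intro h E
    -- kernel triviality
    have key : ∀ Z : Matrix (Fin m) (Fin n) ℂ,
        A * Z - Z.map (starRingEnd ℂ) * D = 0 → Z = 0 := by
      intro Z hZ
      rw [sub_eq_zero] at hZ
      have hconj : A.map (starRingEnd ℂ) * Z.map (starRingEnd ℂ)
          = Z * D.map (starRingEnd ℂ) := by
        have h0 := congrArg (fun M => M.map (starRingEnd ℂ)) hZ
        simp only [Matrix.map_mul] at h0
        rw [← map_conj_conj Z]
        conv_rhs => rw [map_conj_conj Z]
        calc A.map (starRingEnd ℂ) * ((Z.map (starRingEnd ℂ)).map (starRingEnd ℂ)).map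
              (starRingEnd ℂ) = A.map (starRingEnd ℂ) * Z.map (starRingEnd ℂ) := by
                rw [map_conj_conj]
          _ = (Z.map (starRingEnd ℂ)).map (starRingEnd ℂ) * D.map (starRingEnd ℂ) := h0
          _ = Z * D.map (starRingEnd ℂ) := by rw [map_conj_conj]
      have hB : (A.map (starRingEnd ℂ) * A) * Z = Z * (D.map (starRingEnd ℂ) * D) := by
        calc (A.map (starRingEnd ℂ) * A) * Z
            = A.map (starRingEnd ℂ) * (A * Z) := Matrix.mul_assoc _ _ _
          _ = A.map (starRingEnd ℂ) * (Z.map (starRingEnd ℂ) * D) := by rw [hZ]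
          _ = (A.map (starRingEnd ℂ) * Z.map (starRingEnd ℂ)) * D :=
              (Matrix.mul_assoc _ _ _).symm
          _ = (Z * D.map (starRingEnd ℂ)) * D := by rw [hconj]
          _ = Z * (D.map (starRingEnd ℂ) * D) := Matrix.mul_assoc _ _ _
      exact my_sylvester_eq_zero _ _ _ h hB
    have hinj : Function.Injective (sylvMap m n A D) := by
      intro X Y hXY
      have h0 : sylvMap m n A D (X - Y) = 0 := by
        rw [map_sub, hXY, sub_self]
      have := key (X - Y) h0
      rwa [sub_eq_zero] at this
    have hsurj : Function.Surjective (sylvMap m n A D) :=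
      (LinearMap.injective_iff_surjective).mp hinj
    obtain ⟨X, hX⟩ := hsurj E
    refine ⟨X, hX, fun Y hY => hinj (hY.trans hX.symm)⟩
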